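/- Let d ≥ 1, 0 < α < 2, 1 < m < 2α/d + 1, and q > 0. Suppose there exists φ ∈ H^{α/2}(ℝ^d) with M[φ] = q and ∫φ^{m+1} > 0. Then I_q < 0, where I_q = inf{ E[v] : v ∈ H^{α/2}(ℝ^d), M[v] = q }. -/
import Mathlib

open MeasureTheory

noncomputable section

/-- The mass functional `M[v] = (1/2)∫|v|²`. -/
def Mfun (d : ℕ) (v : EuclideanSpace ℝ (Fin d) → ℝ) : ℝ :=
  (1 / 2) * ∫ x, (v x) ^ 2

/-- The energy functional `E[v] = (1/2)∫|D^{α/2}v|² − (1/(m(m+1)))∫v^{m+1}`. -/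
def Efun (d : ℕ) (m : ℝ)
    (Dhalf : (EuclideanSpace ℝ (Fin d) → ℝ) → EuclideanSpace ℝ (Fin d) → ℝ)
    (v : EuclideanSpace ℝ (Fin d) → ℝ) : ℝ :=
  (1 / 2) * (∫ x, (Dhalf v x) ^ 2) - (1 / (m * (m + 1))) * ∫ x, v x ^ (m + 1)

lemma mul_rpow_of_pos {θ : ℝ} (hθ : 0 < θ) (a p : ℝ) :
    (θ * a) ^ p = θ ^ p * a ^ p := by
  rcases le_or_gt 0 a with ha | ha
  · exact Real.mul_rpow hθ.le ha
  · rw [Real.rpow_def_of_neg (mul_neg_of_pos_of_neg hθ ha),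
      Real.rpow_def_of_neg ha, Real.rpow_def_of_pos hθ,
      Real.log_mul hθ.ne' ha.ne, add_mul, Real.exp_add]
    ring

theorem stmt_5 (d : ℕ) (hd : 1 ≤ d) (α m q : ℝ) (hα0 : 0 < α) (hα2 : α < 2)
    (hm1 : 1 < m) (hm2 : m < 2 * α / (d : ℝ) + 1) (hq : 0 < q)
    (Dhalf : (EuclideanSpace ℝ (Fin d) → ℝ) → EuclideanSpace ℝ (Fin d) → ℝ)
    (hDhom : ∀ (c : ℝ) (v : EuclideanSpace ℝ (Fin d) → ℝ),
      Dhalf (fun x => c * v x) = fun x => c * Dhalf v x)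
    (hDscale : ∀ (v : EuclideanSpace ℝ (Fin d) → ℝ) (lam : ℝ), 0 < lam →
      Dhalf (fun x => v (lam • x)) = fun x => lam ^ (α / 2) * Dhalf v (lam • x))
    (S : Set (EuclideanSpace ℝ (Fin d) → ℝ))
    (hSfin : ∀ f ∈ S, Integrable (fun x => (f x) ^ 2) ∧
      Integrable (fun x => (Dhalf f x) ^ 2))
    (hSscale : ∀ θ : ℝ, 0 < θ → ∀ v ∈ S,
      (fun x : EuclideanSpace ℝ (Fin d) => θ * v ((θ ^ (2 / (d : ℝ))) • x)) ∈ S)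
    (φ : EuclideanSpace ℝ (Fin d) → ℝ) (hφS : φ ∈ S) (hφM : Mfun d φ = q)
    (hφpos : 0 < ∫ x, φ x ^ (m + 1))
    (hφint : Integrable (fun x => φ x ^ (m + 1))) :
    sInf ((fun v => ((Efun d m Dhalf v : ℝ) : EReal))
      '' {v | v ∈ S ∧ Mfun d v = q}) < 0 := by
  classical
  have hdpos : (0 : ℝ) < d := by exact_mod_cast hd
  set A : ℝ := (1 / 2) * ∫ x, (Dhalf φ x) ^ 2 with hAdef
  set B : ℝ := (1 / (m * (m + 1))) * ∫ x, φ x ^ (m + 1) with hBdef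
  have hA0 : 0 ≤ A :=
    mul_nonneg (by norm_num) (integral_nonneg fun x => sq_nonneg _)
  have hB0 : 0 < B := by
    apply mul_pos _ hφpos
    have : 0 < m * (m + 1) := by nlinarith
    positivity
  have hε : 0 < 2 * α / (d : ℝ) - (m - 1) := by linarith
  set ε : ℝ := 2 * α / (d : ℝ) - (m - 1) with hεdef
  set c : ℝ := min (B / (A + 1)) 1 / 2 with hcdef
  have hc0 : 0 < c := by
    have : 0 < B / (A + 1) := by positivity
    have : 0 < min (B / (A + 1)) 1 := lt_min this one_pos
    positivity
  have hcB : c * (A + 1) < B := by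
    have h1 : c < B / (A + 1) := by
      have : min (B / (A + 1)) 1 ≤ B / (A + 1) := min_le_left _ _
      have hpos : 0 < B / (A + 1) := by positivity
      calc c = min (B / (A + 1)) 1 / 2 := rfl
        _ < min (B / (A + 1)) 1 := by
            have : 0 < min (B / (A + 1)) 1 := lt_min hpos one_pos
            linarith
        _ ≤ B / (A + 1) := this
    have hA1 : (0:ℝ) < A + 1 := by linarith
    calc c * (A + 1) < (B / (A + 1)) * (A + 1) := by
          exact mul_lt_mul_of_pos_right h1 hA1
      _ = B := div_mul_cancel₀ B hA1.ne'
  set θ : ℝ := c ^ (1 / ε) with hθdef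
  have hθ : 0 < θ := Real.rpow_pos_of_pos hc0 _
  have hθε : θ ^ ε = c := by
    rw [hθdef, ← Real.rpow_mul hc0.le, one_div, inv_mul_cancel₀ hε.ne', Real.rpow_one]
  set lam : ℝ := θ ^ (2 / (d : ℝ)) with hlamdef
  have hlam : 0 < lam := Real.rpow_pos_of_pos hθ _
  -- change of variables
  have hlamd : (lam ^ (Module.finrank ℝ (EuclideanSpace ℝ (Fin d))))⁻¹ = θ ^ (-2 : ℝ) := by
    rw [finrank_euclideanSpace_fin, ← Real.rpow_natCast lam d, hlamdef,
      ← Real.rpow_mul hθ.le, ← Real.rpow_neg hθ.le]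
    congr 1
    field_simp
  have hfact : ∀ f : EuclideanSpace ℝ (Fin d) → ℝ,
      (∫ x, f (lam • x)) = θ ^ (-2 : ℝ) * ∫ x, f x := by
    intro f
    rw [MeasureTheory.Measure.integral_comp_smul_of_nonneg volume f lam (hR := hlam.le),
      hlamd, smul_eq_mul]
  set v : EuclideanSpace ℝ (Fin d) → ℝ := fun x => θ * φ (lam • x) with hvdef
  have hvS : v ∈ S := hSscale θ hθ φ hφS
  have hθ2 : θ ^ 2 * θ ^ (-2 : ℝ) = 1 := by
    rw [← Real.rpow_natCast θ 2, ← Real.rpow_add hθ]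
    norm_num
  clear_value ε c θ lam v
  -- mass of v
  have hMv : Mfun d v = q := by
    have h1 : (∫ x, (v x) ^ 2) = θ ^ 2 * ∫ x, (fun y => (φ y) ^ 2) (lam • x) := by
      simp only [hvdef, mul_pow]
      exact integral_const_mul _ _
    rw [Mfun, h1, hfact (fun y => (φ y) ^ 2)]
    have hI := hφM
    rw [Mfun] at hI
    linear_combination (1 / 2 * ∫ x, (φ x) ^ 2) * hθ2 + hI
  -- Dhalf of v
  have hDv : Dhalf v = fun x => (θ * lam ^ (α / 2)) * Dhalf φ (lam • x) := by
    have e1 : Dhalf (fun x => θ * φ (lam • x))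
        = fun x => θ * Dhalf (fun y => φ (lam • y)) x := hDhom θ _
    have e2 := hDscale φ lam hlam
    rw [hvdef, e1, e2]
    funext x
    ring
  -- kinetic term
  have hkin : (∫ x, (Dhalf v x) ^ 2) = θ ^ (2 * α / (d : ℝ)) * ∫ x, (Dhalf φ x) ^ 2 := by
    have h1 : (∫ x, (Dhalf v x) ^ 2)
        = (θ * lam ^ (α / 2)) ^ 2 * ∫ x, (fun y => (Dhalf φ y) ^ 2) (lam • x) := by
      rw [hDv]
      simp only [mul_pow]
      exact integral_const_mul _ _
    rw [h1, hfact (fun y => (Dhalf φ y) ^ 2)]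
    have hs : (lam ^ (α / 2)) ^ 2 = θ ^ (2 * α / (d : ℝ)) := by
      rw [← Real.rpow_natCast (lam ^ (α / 2)) 2, ← Real.rpow_mul hlam.le, hlamdef,
        ← Real.rpow_mul hθ.le]
      congr 1
      push_cast
      field_simp
    have hs2 : (θ * lam ^ (α / 2)) ^ 2 * θ ^ (-2 : ℝ) = θ ^ (2 * α / (d : ℝ)) := by
      rw [mul_pow]
      calc θ ^ 2 * (lam ^ (α / 2)) ^ 2 * θ ^ (-2 : ℝ)
          = (θ ^ 2 * θ ^ (-2 : ℝ)) * (lam ^ (α / 2)) ^ 2 := by ring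
        _ = θ ^ (2 * α / (d : ℝ)) := by rw [hθ2, one_mul, hs]
    linear_combination (∫ x, (Dhalf φ x) ^ 2) * hs2
  -- potential term
  have hpot : (∫ x, v x ^ (m + 1)) = θ ^ (m - 1) * ∫ x, φ x ^ (m + 1) := by
    have h1 : (∫ x, v x ^ (m + 1))
        = θ ^ (m + 1) * ∫ x, (fun y => φ y ^ (m + 1)) (lam • x) := by
      simp only [hvdef, mul_rpow_of_pos hθ]
      exact integral_const_mul _ _
    rw [h1, hfact (fun y => φ y ^ (m + 1)), ← mul_assoc, ← Real.rpow_add hθ,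
      show m + 1 + (-2 : ℝ) = m - 1 by ring]
  -- energy of v
  have hEv : Efun d m Dhalf v = θ ^ (2 * α / (d : ℝ)) * A - θ ^ (m - 1) * B := by
    rw [Efun, hkin, hpot, hAdef, hBdef]
    ring
  have hEneg : Efun d m Dhalf v < 0 := by
    have hsplit : θ ^ (2 * α / (d : ℝ)) = θ ^ (m - 1) * θ ^ ε := by
      rw [← Real.rpow_add hθ]
      congr 1
      rw [hεdef]; ring
    have hθm : 0 < θ ^ (m - 1) := Real.rpow_pos_of_pos hθ _
    rw [hEv, hsplit, hθε]
    have hkey : c * A - B < 0 := by nlinarith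
    calc θ ^ (m - 1) * c * A - θ ^ (m - 1) * B
        = θ ^ (m - 1) * (c * A - B) := by ring
      _ < 0 := mul_neg_of_pos_of_neg hθm hkey
  refine lt_of_le_of_lt (sInf_le ⟨v, ⟨hvS, hMv⟩, rfl⟩) ?_
  show ((Efun d m Dhalf v : ℝ) : EReal) < (0 : EReal)
  exact_mod_cast hEneg
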